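/- For natural numbers n, m ≥ 1, the polynomials C_n and C_m have no common root if and only if gcd(n, m) ∈ {1, 2}. -/

import Mathlib

open Polynomial Real

noncomputable def Cpoly (n : ℕ) : Polynomial ℝ :=
  ∏ j ∈ Finset.Icc 1 ((n - 1) / 2),
    (Polynomial.X - Polynomial.C (2 * Real.cos (2 * j * Real.pi / n)))

lemma Cpoly_eval_zero_iff (n : ℕ) (x : ℝ) :
    (Cpoly n).eval x = 0 ↔
      ∃ j ∈ Finset.Icc 1 ((n - 1) / 2), x = 2 * Real.cos (2 * j * Real.pi / n) := by
  simp [Cpoly, Polynomial.eval_prod, Finset.prod_eq_zero_iff, sub_eq_zero]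

lemma mem_bounds {n j : ℕ} (hn : 1 ≤ n) (h : j ∈ Finset.Icc 1 ((n - 1) / 2)) :
    1 ≤ j ∧ 2 * j < n := by
  rw [Finset.mem_Icc] at h
  have h2 : j * 2 ≤ n - 1 := (Nat.le_div_iff_mul_le (by norm_num)).mp h.2
  exact ⟨h.1, by omega⟩

lemma angle_mem {n j : ℕ} (hj1 : 1 ≤ j) (hj2 : 2 * j < n) :
    (2 * j * Real.pi / n) ∈ Set.Icc (0:ℝ) Real.pi := by
  have hn1 : 0 < n := by omega
  have hn0 : (0:ℝ) < n := by exact_mod_cast hn1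
  constructor
  · positivity
  · rw [div_le_iff₀ hn0]
    have : (2 * j : ℝ) ≤ n := by exact_mod_cast hj2.le
    nlinarith [Real.pi_pos]

lemma nt_lemma {n m j k : ℕ} (hj1 : 1 ≤ j) (hj2 : 2 * j < n) (hk1 : 1 ≤ k)
    (hk2 : 2 * k < m) (heq : j * m = k * n) : 3 ≤ Nat.gcd n m := by
  have hn : 0 < n := by omega
  have hm : 0 < m := by omega
  set d := Nat.gcd n m with hd
  have hd0 : 0 < d := Nat.gcd_pos_of_pos_left m hn
  have hdn : d ∣ n := Nat.gcd_dvd_left n m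
  have hdm : d ∣ m := Nat.gcd_dvd_right n m
  set n' := n / d with hn'
  set m' := m / d with hm'
  have hnn : n = d * n' := (Nat.div_mul_cancel hdn).symm.trans (mul_comm _ _)
  have hmm : m = d * m' := (Nat.div_mul_cancel hdm).symm.trans (mul_comm _ _)
  have hcop : Nat.Coprime n' m' := Nat.coprime_div_gcd_div_gcd hd0
  have heq' : j * m' = k * n' := by
    have : d * (j * m') = d * (k * n') := by
      rw [hnn, hmm] at heq; ring_nf at heq ⊢; linarith [heq]
    exact Nat.eq_of_mul_eq_mul_left hd0 this
  have hdvd : n' ∣ j := by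
    have : n' ∣ j * m' := ⟨k, by rw [heq']; ring⟩
    exact (Nat.Coprime.dvd_of_dvd_mul_right hcop this)
  have hn'0 : 0 < n' := by
    rcases Nat.eq_zero_or_pos n' with h | h
    · rw [h, mul_zero] at hnn; omega
    · exact h
  have hle : n' ≤ j := Nat.le_of_dvd (by omega) hdvd
  have h1 : 2 * n' ≤ 2 * j := Nat.mul_le_mul_left 2 hle
  have h2 : 2 * j < d * n' := hnn ▸ hj2
  have h3 : 2 * n' < d * n' := lt_of_le_of_lt h1 h2
  have h4 : 2 < d := Nat.lt_of_mul_lt_mul_right h3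
  omega

theorem Cpoly_coprime_iff (n m : ℕ) (hn : 1 ≤ n) (hm : 1 ≤ m) :
    (∀ x : ℝ, ¬((Cpoly n).eval x = 0 ∧ (Cpoly m).eval x = 0)) ↔
      Nat.gcd n m = 1 ∨ Nat.gcd n m = 2 := by
  constructor
  · intro h
    by_contra hg
    push_neg at hg
    have hd0 : 0 < Nat.gcd n m := Nat.gcd_pos_of_pos_left m hn
    have hd3 : 3 ≤ Nat.gcd n m := by omega
    set d := Nat.gcd n m with hd
    have hdn : d ∣ n := Nat.gcd_dvd_left n m
    have hdm : d ∣ m := Nat.gcd_dvd_right n m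
    set j := n / d with hj
    set k := m / d with hk
    have hnn : n = d * j := (Nat.div_mul_cancel hdn).symm.trans (mul_comm _ _)
    have hmm : m = d * k := (Nat.div_mul_cancel hdm).symm.trans (mul_comm _ _)
    have hj1 : 1 ≤ j := Nat.div_pos (Nat.le_of_dvd hn hdn) (by omega)
    have hk1 : 1 ≤ k := Nat.div_pos (Nat.le_of_dvd hm hdm) (by omega)
    have h3j : 3 * j ≤ d * j := Nat.mul_le_mul_right j hd3
    have h3k : 3 * k ≤ d * k := Nat.mul_le_mul_right k hd3
    have hjmem : j ∈ Finset.Icc 1 ((n - 1) / 2) := by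
      rw [Finset.mem_Icc]
      exact ⟨hj1, (Nat.le_div_iff_mul_le (by norm_num)).mpr (by omega)⟩
    have hkmem : k ∈ Finset.Icc 1 ((m - 1) / 2) := by
      rw [Finset.mem_Icc]
      exact ⟨hk1, (Nat.le_div_iff_mul_le (by norm_num)).mpr (by omega)⟩
    have hang : (2 * j * Real.pi / n : ℝ) = 2 * k * Real.pi / m := by
      have hjR : (n : ℝ) = d * j := by exact_mod_cast hnn
      have hkR : (m : ℝ) = d * k := by exact_mod_cast hmm
      rw [hjR, hkR]
      have hj0 : (j : ℝ) ≠ 0 := by positivity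
      have hk0 : (k : ℝ) ≠ 0 := by positivity
      have hdR : (d : ℝ) ≠ 0 := by positivity
      field_simp
    apply h (2 * Real.cos (2 * j * Real.pi / n))
    constructor
    · rw [Cpoly_eval_zero_iff]; exact ⟨j, hjmem, rfl⟩
    · rw [Cpoly_eval_zero_iff]; exact ⟨k, hkmem, by rw [hang]⟩
  · rintro hg x ⟨h1, h2⟩
    rw [Cpoly_eval_zero_iff] at h1 h2
    obtain ⟨j, hjmem, hjx⟩ := h1
    obtain ⟨k, hkmem, hkx⟩ := h2
    obtain ⟨hj1, hj2⟩ := mem_bounds hn hjmem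
    obtain ⟨hk1, hk2⟩ := mem_bounds hm hkmem
    have hcos : Real.cos (2 * j * Real.pi / n) = Real.cos (2 * k * Real.pi / m) := by
      have := hjx.symm.trans hkx
      linarith
    have hang : (2 * j * Real.pi / n : ℝ) = 2 * k * Real.pi / m :=
      Real.injOn_cos (angle_mem hj1 hj2) (angle_mem hk1 hk2) hcos
    have hjm : j * m = k * n := by
      have hn0 : (n : ℝ) ≠ 0 := by positivity
      have hm0 : (m : ℝ) ≠ 0 := by positivity
      have hpi : Real.pi ≠ 0 := Real.pi_ne_zero
      have : (j : ℝ) * m = k * n := by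
        field_simp at hang
        have h2pi : (2:ℝ) * Real.pi ≠ 0 := by positivity
        have h' : (j:ℝ) * m * (2 * Real.pi) = (k:ℝ) * n * (2 * Real.pi) := by
          linear_combination (2 * Real.pi) * hang
        exact mul_right_cancel₀ h2pi h'
      exact_mod_cast this
    have := nt_lemma hj1 hj2 hk1 hk2 hjm
    omega
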